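/- Let L be a Lie-Rinehart algebra with a nondegenerate 2-form ω and a torsion-free connection ∇⁰ on L. Define ∇_X Y = ∇⁰_X Y + Θ(X,Y) + A(X,Y), where Θ and A are determined by ω(Θ(X,Y), Z) = (1/2)(∇⁰_X ω)(Y,Z) and ω(A(X,Y), Z) = (1/6)[(∇⁰_Y ω)(X,Z) + (∇⁰_Z ω)(X,Y)]. If dω = 0, then ∇ is a connection on L that preserves ω (∇_X ω = 0 for all X) and has zero torsion. -/

import Mathlib

/-- Given a torsion-free connection `∇⁰` on a Lie-Rinehart
algebra `L` with nondegenerate 2-form `ω`, define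
`∇_X Y = ∇⁰_X Y + Θ(X,Y) + A(X,Y)` where
`ω(Θ(X,Y),Z) = (1/2)(∇⁰_X ω)(Y,Z)` and
`ω(A(X,Y),Z) = (1/6)[(∇⁰_Y ω)(X,Z) + (∇⁰_Z ω)(X,Y)]`.
If `dω = 0`, then `∇` is a connection on `L` preserving `ω` with zero torsion. -/
theorem symplectic_connection_construction
    {K C L : Type*} [CommRing K] [Invertible (2 : K)] [Invertible (6 : K)]
    [CommRing C] [Algebra K C]
    [LieRing L] [Module C L] [Module K L]
    [IsScalarTower K C L] [SMulCommClass K C L]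
    (ι : L → C → C)
    (hιsmul : ∀ (f : C) (X : L) (g : C), ι (f • X) g = f * ι X g)
    (hιadd : ∀ (X : L) (f g : C), ι X (f + g) = ι X f + ι X g)
    (hder : ∀ (X : L) (f g : C), ι X (f * g) = f * ι X g + ι X f * g)
    (hcompat : ∀ (X Y : L) (f : C), ⁅X, f • Y⁆ = f • ⁅X, Y⁆ + ι X f • Y)
    (ω : L → L → C)
    (hskew : ∀ X Y : L, ω X Y = -ω Y X)
    (hωadd1 : ∀ X Y Z : L, ω (X + Y) Z = ω X Z + ω Y Z)
    (hωadd2 : ∀ X Y Z : L, ω X (Y + Z) = ω X Y + ω X Z)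
    (hωsmul1 : ∀ (f : C) (X Y : L), ω (f • X) Y = f * ω X Y)
    (hωsmul2 : ∀ (f : C) (X Y : L), ω X (f • Y) = f * ω X Y)
    (hnondeg : ∀ X : L, (∀ Y : L, ω X Y = 0) → X = 0)
    (nabla0 : L → L → L)
    (h0add1 : ∀ X Y Z : L, nabla0 (X + Y) Z = nabla0 X Z + nabla0 Y Z)
    (h0add2 : ∀ X Y Z : L, nabla0 X (Y + Z) = nabla0 X Y + nabla0 X Z)
    (h0C1 : ∀ (f : C) (X Y : L), nabla0 (f • X) Y = f • nabla0 X Y)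
    (h0Leib : ∀ (X : L) (f : C) (Y : L),
      nabla0 X (f • Y) = f • nabla0 X Y + ι X f • Y)
    (h0tor : ∀ X Y : L, nabla0 X Y - nabla0 Y X = ⁅X, Y⁆)
    -- the covariant derivative of ω with respect to ∇⁰
    (nabla0ω : L → L → L → C)
    (hnabla0ω : ∀ X Y Z : L,
      nabla0ω X Y Z = ι X (ω Y Z) - ω (nabla0 X Y) Z - ω Y (nabla0 X Z))
    -- assumption dω = 0
    (hclosed : ∀ X Y Z : L,
      ι X (ω Y Z) - ι Y (ω X Z) + ι Z (ω X Y)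
        - ω ⁅X, Y⁆ Z + ω ⁅X, Z⁆ Y - ω ⁅Y, Z⁆ X = 0)
    (Θ A : L → L → L)
    (hΘ : ∀ X Y Z : L, ω (Θ X Y) Z = (⅟2 : K) • nabla0ω X Y Z)
    (hA : ∀ X Y Z : L,
      ω (A X Y) Z = (⅟6 : K) • (nabla0ω Y X Z + nabla0ω Z X Y))
    (nabla : L → L → L)
    (hnabla : ∀ X Y : L, nabla X Y = nabla0 X Y + Θ X Y + A X Y) :
    -- ∇ is a connection on L:
    (∀ (f : C) (X Y : L), nabla (f • X) Y = f • nabla X Y) ∧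
    (∀ (X : L) (f : C) (Y : L),
      nabla X (f • Y) = f • nabla X Y + ι X f • Y) ∧
    -- ∇ preserves ω:
    (∀ X Y Z : L, ι X (ω Y Z) - ω (nabla X Y) Z - ω Y (nabla X Z) = 0) ∧
    -- ∇ has zero torsion:
    (∀ X Y : L, nabla X Y - nabla Y X - ⁅X, Y⁆ = 0) := by
  -- basic facts about the derivation ι
  have hι0 : ∀ X : L, ι X (0:C) = 0 := by
    intro X
    have h := hιadd X 0 0
    rw [add_zero] at h
    exact left_eq_add.mp h
  have hιneg : ∀ (X : L) (c : C), ι X (-c) = - ι X c := by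
    intro X c
    have h := hιadd X c (-c)
    rw [add_neg_cancel, hι0] at h
    exact eq_neg_of_add_eq_zero_right h.symm
  -- basic facts about ω
  have hω0 : ∀ Z : L, ω 0 Z = 0 := by
    intro Z
    have h := hωadd1 0 0 Z
    rw [add_zero] at h
    exact left_eq_add.mp h
  have hωneg : ∀ V Z : L, ω (-V) Z = - ω V Z := by
    intro V Z
    have h := hωadd1 V (-V) Z
    rw [add_neg_cancel, hω0] at h
    exact eq_neg_of_add_eq_zero_right h.symm
  have hωsub : ∀ U V Z : L, ω (U - V) Z = ω U Z - ω V Z := by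
    intro U V Z
    rw [sub_eq_add_neg, hωadd1, hωneg, ← sub_eq_add_neg]
  have hext : ∀ U V : L, (∀ Z : L, ω U Z = ω V Z) → U = V := by
    intro U V h
    have h0 : ∀ Z : L, ω (U - V) Z = 0 := by
      intro Z; rw [hωsub, h, sub_self]
    exact sub_eq_zero.mp (hnondeg _ h0)
  -- C-multilinearity of nabla0ω
  have hT1 : ∀ (f : C) (X Y Z : L), nabla0ω (f • X) Y Z = f * nabla0ω X Y Z := by
    intro f X Y Z
    rw [hnabla0ω, hnabla0ω, hιsmul, h0C1, h0C1, hωsmul1, hωsmul2]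
    ring
  have hT2 : ∀ (f : C) (X Y Z : L), nabla0ω X (f • Y) Z = f * nabla0ω X Y Z := by
    intro f X Y Z
    rw [hnabla0ω, hnabla0ω, hωsmul1, hder, h0Leib, hωadd1, hωsmul1, hωsmul1, hωsmul1]
    ring
  have hTskew : ∀ X Y Z : L, nabla0ω X Y Z = - nabla0ω X Z Y := by
    intro X Y Z
    rw [hnabla0ω, hnabla0ω, hskew Y Z, hιneg]
    linear_combination - hskew (nabla0 X Y) Z - hskew Y (nabla0 X Z)
  have hT3 : ∀ (f : C) (X Y Z : L), nabla0ω X Y (f • Z) = f * nabla0ω X Y Z := by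
    intro f X Y Z
    rw [hTskew X Y (f • Z), hT2, hTskew X Y Z]
    ring
  -- cyclic identity from dω = 0
  have hcyc : ∀ X Y Z : L,
      nabla0ω X Y Z - nabla0ω Y X Z + nabla0ω Z X Y = 0 := by
    intro X Y Z
    have h := hclosed X Y Z
    rw [← h0tor X Y, ← h0tor X Z, ← h0tor Y Z, hωsub, hωsub, hωsub] at h
    rw [hnabla0ω, hnabla0ω, hnabla0ω]
    linear_combination h - hskew Y (nabla0 X Z) + hskew X (nabla0 Y Z)
      - hskew X (nabla0 Z Y)
  -- rewrite hΘ and hA via algebraMap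
  set c2 : C := algebraMap K C (⅟2 : K) with hc2
  set c6 : C := algebraMap K C (⅟6 : K) with hc6
  have hΘ' : ∀ X Y Z : L, ω (Θ X Y) Z = c2 * nabla0ω X Y Z := by
    intro X Y Z; rw [hΘ, Algebra.smul_def]
  have hA' : ∀ X Y Z : L,
      ω (A X Y) Z = c6 * (nabla0ω Y X Z + nabla0ω Z X Y) := by
    intro X Y Z; rw [hA, Algebra.smul_def]
  have h2 : (2:C) * c2 = 1 := by
    rw [hc2, show ((2:C)) = algebraMap K C 2 from (map_ofNat _ 2).symm, ← map_mul,
      mul_invOf_self, map_one]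
  have h63 : (3:C) * c6 = c2 := by
    have hK : (⅟2 : K) = 3 * ⅟6 := by
      refine invOf_eq_right_inv ?_
      calc (2:K) * (3 * ⅟6) = 6 * ⅟6 := by ring
        _ = 1 := mul_invOf_self 6
    rw [hc2, hc6, hK, map_mul, show (algebraMap K C 3) = (3:C) from map_ofNat _ 3]
  -- C-linearity of Θ and A
  have hΘ1 : ∀ (f : C) (X Y : L), Θ (f • X) Y = f • Θ X Y := by
    intro f X Y
    refine hext _ _ fun Z => ?_
    rw [hΘ', hT1, hωsmul1, hΘ']; ring
  have hΘ2 : ∀ (f : C) (X Y : L), Θ X (f • Y) = f • Θ X Y := by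
    intro f X Y
    refine hext _ _ fun Z => ?_
    rw [hΘ', hT2, hωsmul1, hΘ']; ring
  have hA1 : ∀ (f : C) (X Y : L), A (f • X) Y = f • A X Y := by
    intro f X Y
    refine hext _ _ fun Z => ?_
    rw [hA', hT2, hT2, hωsmul1, hA']; ring
  have hA2 : ∀ (f : C) (X Y : L), A X (f • Y) = f • A X Y := by
    intro f X Y
    refine hext _ _ fun Z => ?_
    rw [hA', hT1, hT3, hωsmul1, hA']; ring
  refine ⟨?_, ?_, ?_, ?_⟩
  · intro f X Y
    rw [hnabla, hnabla, h0C1, hΘ1, hA1, smul_add, smul_add]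
  · intro X f Y
    rw [hnabla, hnabla, h0Leib, hΘ2, hA2, smul_add, smul_add]
    abel
  · intro X Y Z
    rw [hnabla, hnabla, hωadd1, hωadd1, hωadd2, hωadd2]
    linear_combination (-1 : C) * (hnabla0ω X Y Z) - hΘ' X Y Z - hA' X Y Z
      - hskew Y (Θ X Z) + hΘ' X Z Y - hskew Y (A X Z) + hA' X Z Y
      + c2 * hTskew X Y Z - (nabla0ω X Y Z) * h2
  · intro X Y
    apply hext _ 0 fun Z => ?_
    rw [hω0, hωsub, hωsub, ← h0tor X Y, hωsub, hnabla, hnabla, hωadd1, hωadd1,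
      hωadd1, hωadd1]
    linear_combination hΘ' X Y Z + hA' X Y Z - hΘ' Y X Z - hA' Y X Z
      - c6 * hTskew Z Y X + 2 * c6 * hcyc X Y Z
      - (nabla0ω X Y Z - nabla0ω Y X Z) * h63
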